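/- For all real numbers x < y, there exist a continuous convex function f : [x,y] → ℝ with antiderivative F such that f((x+y)/2) > ((1/3)F(x) − (8/3)F((3x+y)/4) + (8/3)F((x+3y)/4) − (1/3)F(y))/(y−x), and there also exist a continuous convex function g : [x,y] → ℝ with antiderivative G such that g((x+y)/2) < ((1/3)G(x) − (8/3)G((3x+y)/4) + (8/3)G((x+3y)/4) − (1/3)G(y))/(y−x). In other words, neither of the two inequalities between f((x+y)/2) and this four-point expression is satisfied by all continuous convex functions. -/

import Mathlib

/-- Example 4: neither `f((x+y)/2) ≤ E(F)` nor `f((x+y)/2) ≥ E(F)`, where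
`E(F) = ((1/3)F(x) - (8/3)F((3x+y)/4) + (8/3)F((x+3y)/4) - (1/3)F(y))/(y-x)`, is
satisfied by all continuous convex functions `f` with antiderivative `F`. -/
theorem stmt_19 (x y : ℝ) (hxy : x < y) :
    (∃ f F : ℝ → ℝ,
        ContinuousOn f (Set.Icc x y) ∧ ConvexOn ℝ (Set.Icc x y) f ∧
        (∀ t ∈ Set.Icc x y, HasDerivWithinAt F (f t) (Set.Icc x y) t) ∧
        f ((x + y) / 2)
          > ((1 / 3) * F x - (8 / 3) * F ((3 * x + y) / 4) + (8 / 3) * F ((x + 3 * y) / 4)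
              - (1 / 3) * F y) / (y - x)) ∧
      (∃ g G : ℝ → ℝ,
        ContinuousOn g (Set.Icc x y) ∧ ConvexOn ℝ (Set.Icc x y) g ∧
        (∀ t ∈ Set.Icc x y, HasDerivWithinAt G (g t) (Set.Icc x y) t) ∧
        g ((x + y) / 2)
          < ((1 / 3) * G x - (8 / 3) * G ((3 * x + y) / 4) + (8 / 3) * G ((x + 3 * y) / 4)
              - (1 / 3) * G y) / (y - x)) := by
  set m : ℝ := (x + y) / 2 with hm
  have hyx : (0:ℝ) < y - x := by linarith
  constructor
  · refine ⟨fun t => (t - m)^4, fun t => (t - m)^5 / 5, ?_, ?_, ?_, ?_⟩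
    · fun_prop
    · refine convexOn_of_hasDerivWithinAt2_nonneg (convex_Icc x y)
        (f' := fun t => 4*(t-m)^3) (f'' := fun t => 12*(t-m)^2) (by fun_prop) ?_ ?_ ?_
      · intro t ht
        have : HasDerivAt (fun t : ℝ => (t - m)^4) (4*(t-m)^3) t := by
          have := ((hasDerivAt_id t).sub_const m).pow 4
          exact this.congr_deriv (by simp only [id_eq]; ring)
        exact this.hasDerivWithinAt
      · intro t ht
        have : HasDerivAt (fun t : ℝ => 4*(t - m)^3) (12*(t-m)^2) t := by
          have := (((hasDerivAt_id t).sub_const m).pow 3).const_mul 4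
          exact this.congr_deriv (by simp only [id_eq]; ring)
        exact this.hasDerivWithinAt
      · intro t ht; positivity
    · intro t ht
      have : HasDerivAt (fun t : ℝ => (t - m)^5 / 5) ((t-m)^4) t := by
        have := (((hasDerivAt_id t).sub_const m).pow 5).div_const 5
        exact this.congr_deriv (by simp only [id_eq]; ring)
      exact this.hasDerivWithinAt
    · rw [gt_iff_lt, div_lt_iff₀ hyx]
      simp only [hm]
      have h5 : (0:ℝ) < (y - x)^5 := by positivity
      nlinarith [h5]
  · refine ⟨fun t => 6*((y-x)/2)^2*(t - m)^2 - (t - m)^4,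
      fun t => 2*((y-x)/2)^2*(t - m)^3 - (t - m)^5 / 5, ?_, ?_, ?_, ?_⟩
    · fun_prop
    · refine convexOn_of_hasDerivWithinAt2_nonneg (convex_Icc x y)
        (f' := fun t => 12*((y-x)/2)^2*(t-m) - 4*(t-m)^3)
        (f'' := fun t => 12*((y-x)/2)^2 - 12*(t-m)^2) (by fun_prop) ?_ ?_ ?_
      · intro t ht
        have : HasDerivAt (fun t : ℝ => 6*((y-x)/2)^2*(t - m)^2 - (t - m)^4)
            (12*((y-x)/2)^2*(t-m) - 4*(t-m)^3) t := by
          have := ((((hasDerivAt_id t).sub_const m).pow 2).const_mul (6*((y-x)/2)^2)).sub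
            (((hasDerivAt_id t).sub_const m).pow 4)
          exact this.congr_deriv (by simp only [id_eq]; ring)
        exact this.hasDerivWithinAt
      · intro t ht
        have : HasDerivAt (fun t : ℝ => 12*((y-x)/2)^2*(t - m) - 4*(t - m)^3)
            (12*((y-x)/2)^2 - 12*(t-m)^2) t := by
          have := (((hasDerivAt_id t).sub_const m).const_mul (12*((y-x)/2)^2)).sub
            ((((hasDerivAt_id t).sub_const m).pow 3).const_mul 4)
          exact this.congr_deriv (by simp only [id_eq]; ring)
        exact this.hasDerivWithinAt
      · intro t ht
        rw [interior_Icc] at ht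
        have h1 : |t - m| ≤ (y - x)/2 := by
          rw [abs_le, hm]; constructor <;> [linarith [ht.1]; linarith [ht.2]]
        have := sq_le_sq' (neg_le_of_abs_le h1 |>.trans_eq rfl) (le_of_abs_le h1)
        nlinarith [this]
    · intro t ht
      have : HasDerivAt (fun t : ℝ => 2*((y-x)/2)^2*(t - m)^3 - (t - m)^5 / 5)
          (6*((y-x)/2)^2*(t - m)^2 - (t - m)^4) t := by
        have := ((((hasDerivAt_id t).sub_const m).pow 3).const_mul (2*((y-x)/2)^2)).sub
          ((((hasDerivAt_id t).sub_const m).pow 5).div_const 5)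
        exact this.congr_deriv (by simp only [id_eq]; ring)
      exact this.hasDerivWithinAt
    · rw [lt_div_iff₀ hyx]
      simp only [hm]
      have h5 : (0:ℝ) < (y - x)^5 := by positivity
      nlinarith [h5]
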